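/- If two replacement policies P and P' of associativity n induce caches with equal trace semantics for some initial cache content cc_0 whose complement in Blocks is infinite (so fresh blocks always exist), then P and P' have equal policy trace semantics. -/
import Mathlib


structure Mealy (I O S : Type) where
  init : S
  step : S → I → S
  out : S → I → O

def Mealy.run {I O S : Type} (M : Mealy I O S) : S → List (I × O) → Prop
  | _, [] => True
  | s, (i, o) :: t => M.out s i = o ∧ M.run (M.step s i) t

def Mealy.traces {I O S : Type} (M : Mealy I O S) : Set (List (I × O)) :=
  {t | M.run M.init t}

inductive PIn (n : ℕ) where
  | hit (i : Fin n)
  | evct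
deriving DecidableEq

inductive POut (n : ℕ) where
  | none
  | evict (i : Fin n)
deriving DecidableEq

inductive COut where
  | hit
  | miss
deriving DecidableEq

/-- The well-formedness conditions on a replacement policy:
`λ(cs, Evct)` is some `Evict i` and `λ(cs, Hit i) = ⊥`. -/
def ValidPolicy {n : ℕ} {S : Type} (P : Mealy (PIn n) (POut n) S) : Prop :=
  (∀ cs, ∃ i, P.out cs PIn.evct = POut.evict i) ∧
  (∀ cs i, P.out cs (PIn.hit i) = POut.none)

/-- The cache transition relation induced by a replacement policy. -/
inductive CacheStep {n : ℕ} {S B : Type} (P : Mealy (PIn n) (POut n) S) :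
    (Fin n → B) × S → B → COut → (Fin n → B) × S → Prop where
  | hit {cc : Fin n → B} {cs : S} {b : B} (i : Fin n) :
      cc i = b → P.out cs (PIn.hit i) = POut.none →
      CacheStep P (cc, cs) b COut.hit (cc, P.step cs (PIn.hit i))
  | miss {cc : Fin n → B} {cs : S} {b : B} (i : Fin n) :
      (∀ j, cc j ≠ b) → P.out cs PIn.evct = POut.evict i →
      CacheStep P (cc, cs) b COut.miss (Function.update cc i b, P.step cs PIn.evct)

def CacheRun {n : ℕ} {S B : Type} (P : Mealy (PIn n) (POut n) S) :
    (Fin n → B) × S → List (B × COut) → Prop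
  | _, [] => True
  | s, (b, o) :: t => ∃ s', CacheStep P s b o s' ∧ CacheRun P s' t

def CacheTraces {n : ℕ} {S B : Type} (P : Mealy (PIn n) (POut n) S)
    (cc₀ : Fin n → B) : Set (List (B × COut)) :=
  {t | CacheRun P (cc₀, P.init) t}


lemma hit_inv {n : ℕ} {S B : Type} (P : Mealy (PIn n) (POut n) S) (hP : ValidPolicy P)
    {cc : Fin n → B} (hinj : Function.Injective cc) (cs : S) (i : Fin n)
    (t : List (B × COut)) :
    CacheRun P (cc, P.step cs (PIn.hit i)) t ↔
      CacheRun P (cc, cs) ((cc i, COut.hit) :: t) := by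
  constructor
  · intro h
    exact ⟨_, CacheStep.hit i rfl (hP.2 cs i), h⟩
  · rintro ⟨s', hstep, hrun⟩
    cases hstep with
    | hit j hj _ =>
        cases hinj hj
        exact hrun

lemma miss_inv {n : ℕ} {S B : Type} (P : Mealy (PIn n) (POut n) S)
    {cc : Fin n → B} {b : B} (hb : ∀ j, cc j ≠ b) {cs : S} {i : Fin n}
    (hout : P.out cs PIn.evct = POut.evict i) (t : List (B × COut)) :
    CacheRun P (Function.update cc i b, P.step cs PIn.evct) t ↔
      CacheRun P (cc, cs) ((b, COut.miss) :: t) := by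
  constructor
  · intro h; exact ⟨_, CacheStep.miss i hb hout, h⟩
  · rintro ⟨s', hstep, hrun⟩
    cases hstep with
    | miss j _ hj =>
        rw [hout] at hj
        injection hj with hji
        subst hji
        exact hrun

lemma evict_eq {n : ℕ} {S S' B : Type} (P : Mealy (PIn n) (POut n) S)
    (P' : Mealy (PIn n) (POut n) S') (hP : ValidPolicy P) (hP' : ValidPolicy P')
    {cc : Fin n → B} (hinj : Function.Injective cc) {b : B} (hb : ∀ j, cc j ≠ b)
    {cs : S} {cs' : S'} {i i' : Fin n}
    (hout : P.out cs PIn.evct = POut.evict i)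
    (hout' : P'.out cs' PIn.evct = POut.evict i')
    (hequiv : ∀ u, CacheRun P (cc, cs) u ↔ CacheRun P' (cc, cs') u) : i = i' := by
  by_contra hne
  have h1 : ¬ CacheRun P (cc, cs) [(b, COut.miss), (cc i, COut.hit)] := by
    rw [← miss_inv P hb hout]
    rintro ⟨s', hstep, -⟩
    cases hstep with
    | hit j hj _ =>
        rcases eq_or_ne j i with rfl | hji
        · rw [Function.update_self] at hj
          exact hb j hj.symm
        · rw [Function.update_of_ne hji] at hj
          exact hji (hinj hj)
  have h2 : CacheRun P' (cc, cs') [(b, COut.miss), (cc i, COut.hit)] := by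
    rw [← miss_inv P' hb hout']
    refine ⟨_, CacheStep.hit i ?_ (hP'.2 _ i), trivial⟩
    rw [Function.update_of_ne hne]
  exact h1 ((hequiv _).2 h2)

lemma transfer {n : ℕ} {S S' B : Type} (P : Mealy (PIn n) (POut n) S)
    (P' : Mealy (PIn n) (POut n) S') (hP : ValidPolicy P) (hP' : ValidPolicy P') :
    ∀ (t : List (PIn n × POut n)) (cc : Fin n → B) (cs : S) (cs' : S'),
      Function.Injective cc → {b : B | ∀ i, cc i ≠ b}.Infinite →
      (∀ u, CacheRun P (cc, cs) u ↔ CacheRun P' (cc, cs') u) →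
      P.run cs t → P'.run cs' t := by
  intro t
  induction t with
  | nil => intro _ _ _ _ _ _ _; trivial
  | cons io rest ih =>
    obtain ⟨pin, pout⟩ := io
    intro cc cs cs' hinj hfresh hequiv hrun
    obtain ⟨hout, hrun⟩ := hrun
    cases pin with
    | hit i =>
      refine ⟨by rw [hP'.2 cs' i, ← hout, hP.2 cs i], ih cc _ _ hinj hfresh ?_ hrun⟩
      intro u
      rw [hit_inv P hP hinj cs i, hit_inv P' hP' hinj cs' i, hequiv]
    | evct =>
      obtain ⟨i, hi⟩ := hP.1 cs
      obtain ⟨i', hi'⟩ := hP'.1 cs'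
      obtain ⟨b, hb⟩ := hfresh.nonempty
      have hb : ∀ j, cc j ≠ b := hb
      have hii : i = i' := evict_eq P P' hP hP' hinj hb hi hi' hequiv
      rw [← hii] at hi'
      have hinj' : Function.Injective (Function.update cc i b) := by
        intro x y hxy
        by_cases hx : x = i <;> by_cases hy : y = i
        · rw [hx, hy]
        · rw [hx, Function.update_self, Function.update_of_ne hy] at hxy
          exact absurd hxy.symm (hb y)
        · rw [hy, Function.update_of_ne hx, Function.update_self] at hxy
          exact absurd hxy (hb x)
        · rw [Function.update_of_ne hx, Function.update_of_ne hy] at hxy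
          exact hinj hxy
      have hfresh' : {b' : B | ∀ j, Function.update cc i b j ≠ b'}.Infinite := by
        refine (hfresh.diff (Set.finite_singleton b)).mono ?_
        rintro x ⟨hx1, hx2⟩ j
        by_cases hj : j = i
        · rw [hj, Function.update_self]
          exact fun h => hx2 (Set.mem_singleton_iff.mpr h.symm)
        · rw [Function.update_of_ne hj]
          exact hx1 j
      refine ⟨by rw [hi', ← hout, hi], ih (Function.update cc i b) _ _ hinj' hfresh' ?_ hrun⟩
      intro u
      rw [miss_inv P hb hi, miss_inv P' hb hi', hequiv]

theorem cache_semantics_determines_policy_semantics {n : ℕ} {S S' B : Type}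
    (P : Mealy (PIn n) (POut n) S) (P' : Mealy (PIn n) (POut n) S')
    (hP : ValidPolicy P) (hP' : ValidPolicy P')
    (cc₀ : Fin n → B) (hcc₀ : Function.Injective cc₀)
    (hfresh : {b : B | ∀ i, cc₀ i ≠ b}.Infinite)
    (heq : CacheTraces P cc₀ = CacheTraces P' cc₀) :
    P.traces = P'.traces := by
  have hequiv : ∀ u, CacheRun P (cc₀, P.init) u ↔ CacheRun P' (cc₀, P'.init) u :=
    fun u => Set.ext_iff.mp heq u
  ext t
  constructor
  · exact fun h => transfer P P' hP hP' t cc₀ _ _ hcc₀ hfresh hequiv h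
  · exact fun h => transfer P' P hP' hP t cc₀ _ _ hcc₀ hfresh (fun u => (hequiv u).symm) h
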